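/- Fix integers i ≤ j, n ≥ 2, a real ρ ∈ (0,1), and configurations x₁,…,xₙ such that every pair appearing as (arrivals, services) in the recursive definition of Dⁿ(x₁,…,xₙ) has finite queue lengths; let dₙ = Dⁿ(x₁,…,xₙ). Then max_{l ∈ [i,j]} | dₙ[i,l] − ρ(l−i+1) | ≤ 2 ∑_{k=1}^{n} max_{l ∈ [i,j]} | x_k[i,l] − ρ(l−i+1) |. -/

import Mathlib

open scoped BigOperators

/-- A particle configuration on `ℤ`: a `{0,1}`-valued function. -/
abbrev Config := ℤ → ℤ

/-- `x` takes only the values `0` and `1`. -/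
def IsConfig (x : Config) : Prop := ∀ i, x i = 0 ∨ x i = 1

/-- `x[i,j] = ∑_{k=i}^j x(k)` (zero if `j < i`). -/
noncomputable def cnt (x : Config) (i j : ℤ) : ℤ := ∑ k ∈ Finset.Icc i j, x k

/-- `(a,s)` has finite queue lengths. -/
def FinQ (a s : Config) : Prop :=
  ∀ i : ℤ, BddAbove {v : ℤ | ∃ j ≤ i, v = cnt a j i - cnt s j i}

/-- The queue length `Q_i(a,s) = sup_{j ≤ i} max(a[j,i] - s[j,i], 0)`. -/
noncomputable def queue (a s : Config) (i : ℤ) : ℤ :=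
  sSup {q : ℤ | ∃ j ≤ i, q = max (cnt a j i - cnt s j i) 0}

/-- The departure configuration `D(a,s)`. -/
noncomputable def dep (a s : Config) : Config := fun i =>
  if s i = 1 ∧ (0 < queue a s (i - 1) ∨ a i = 1) then 1 else 0

/-- The unused-service configuration `U(a,s)`. -/
noncomputable def unusedSrv (a s : Config) : Config := fun i =>
  if s i = 1 ∧ queue a s (i - 1) = 0 ∧ a i = 0 then 1 else 0

/-- `R(a,s)(i) = a(i) + U(a,s)(i)`. -/
noncomputable def Rmap (a s : Config) : Config := fun i => a i + unusedSrv a s i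

/-- Truncation: `x_{n,0}(i) = x(i)` for `i ≥ n`, `0` otherwise. -/
def trunc (x : Config) (n : ℤ) : Config := fun i => if n ≤ i then x i else 0

/-- Left-peeling tandem queue: `Dtandem x [s₁,…,s_k] = D(…D(D(x,s₁),s₂)…,s_k)`. -/
noncomputable def Dtandem : Config → List Config → Config
  | x, [] => x
  | x, s :: rest => Dtandem (dep x s) rest

/-- `DtandemList [x₁,…,xₙ] = Dⁿ(x₁,…,xₙ)`. -/
noncomputable def DtandemList : List Config → Config
  | [] => fun _ => 0
  | x :: rest => Dtandem x rest

/-- `DtandemN x = Dⁿ(x 0, …, x (n-1))`. -/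
noncomputable def DtandemN {n : ℕ} (x : Fin n → Config) : Config :=
  DtandemList (List.ofFn x)

/-- Every pair appearing as (arrivals, services) in the recursive definition of the
tandem departure map has finite queue lengths. -/
def TandemFinQ : List Config → Prop
  | [] => True
  | [_] => True
  | x :: s :: rest => FinQ x s ∧ TandemFinQ (dep x s :: rest)
  termination_by l => l.length

lemma cnt_empty (x : Config) {m l : ℤ} (h : l < m) : cnt x m l = 0 := by
  unfold cnt; rw [Finset.Icc_eq_empty (by omega)]; simp

lemma cnt_self (x : Config) (m : ℤ) : cnt x m m = by exact x m := by
  unfold cnt; rw [Finset.Icc_self]; simp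

lemma cnt_succ (x : Config) {m l : ℤ} (h : m ≤ l + 1) :
    cnt x m (l + 1) = cnt x m l + x (l + 1) := by
  unfold cnt
  have : Finset.Icc m (l+1) = insert (l+1) (Finset.Icc m l) := by
    ext k; simp [Finset.mem_Icc]; omega
  rw [this, Finset.sum_insert (by simp [Finset.mem_Icc])]
  omega

lemma cnt_split (x : Config) {i m l : ℤ} (h1 : i ≤ m) (h2 : m ≤ l + 1) :
    cnt x i l = cnt x i (m-1) + cnt x m l := by
  unfold cnt
  rw [← Finset.sum_union]
  · congr 1; ext k; simp [Finset.mem_Icc]; omega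
  · rw [Finset.disjoint_left]; intro k hk hk'; simp [Finset.mem_Icc] at hk hk'; omega

def qset (a s : Config) (i : ℤ) : Set ℤ :=
  {q : ℤ | ∃ j ≤ i, q = max (cnt a j i - cnt s j i) 0}

lemma queue_eq (a s : Config) (i : ℤ) : queue a s i = sSup (qset a s i) := rfl

lemma qset_nonempty (a s : Config) (i : ℤ) : (qset a s i).Nonempty :=
  ⟨max (cnt a i i - cnt s i i) 0, i, le_refl i, rfl⟩

lemma qset_bdd (a s : Config) (h : FinQ a s) (i : ℤ) : BddAbove (qset a s i) := by
  obtain ⟨B, hB⟩ := h i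
  refine ⟨max B 0, ?_⟩
  rintro q ⟨j, hj, rfl⟩
  exact max_le_max (hB ⟨j, hj, rfl⟩) le_rfl

lemma queue_nonneg (a s : Config) (h : FinQ a s) (i : ℤ) : 0 ≤ queue a s i := by
  have := le_csSup (qset_bdd a s h i) (qset_nonempty a s i).choose_spec
  calc (0:ℤ) ≤ max (cnt a i i - cnt s i i) 0 := le_max_right _ _
    _ ≤ queue a s i := le_csSup (qset_bdd a s h i) ⟨i, le_refl i, rfl⟩

lemma queue_lindley (a s : Config) (h : FinQ a s) (l : ℤ) :
    queue a s (l + 1) = max (queue a s l + a (l+1) - s (l+1)) 0 := by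
  have hbd1 := qset_bdd a s h (l+1)
  have hbd0 := qset_bdd a s h l
  have hne0 := qset_nonempty a s l
  apply le_antisymm
  · apply csSup_le (qset_nonempty a s (l+1))
    rintro q ⟨j, hj, rfl⟩
    rcases eq_or_lt_of_le hj with rfl | hjl
    · rw [cnt_self, cnt_self]
      have h0 := queue_nonneg a s h l
      simp only [le_max_iff]
      rcases le_or_gt (a (l+1) - s (l+1)) 0 with h' | h'
      · right; simp; omega
      · left; simp; omega
    · have hj' : j ≤ l := by omega
      rw [cnt_succ a (by omega), cnt_succ s (by omega)]
      have hmem : cnt a j l - cnt s j l ≤ queue a s l := by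
        calc cnt a j l - cnt s j l ≤ max (cnt a j l - cnt s j l) 0 := le_max_left _ _
          _ ≤ queue a s l := le_csSup hbd0 ⟨j, hj', rfl⟩
      simp only [le_max_iff]
      rcases le_or_gt (cnt a j l + a (l+1) - (cnt s j l + s (l+1))) 0 with h' | h'
      · right; omega
      · left; omega
  · rw [max_le_iff]
    constructor
    · have : queue a s l ≤ queue a s (l+1) - (a (l+1) - s (l+1)) := by
        apply csSup_le hne0
        rintro q ⟨j, hj, rfl⟩
        have h1 : cnt a j (l+1) - cnt s j (l+1) ≤ queue a s (l+1) := by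
          calc _ ≤ max (cnt a j (l+1) - cnt s j (l+1)) 0 := le_max_left _ _
            _ ≤ _ := le_csSup hbd1 ⟨j, by omega, rfl⟩
        have h2 : a (l+1) - s (l+1) = cnt a (l+1) (l+1) - cnt s (l+1) (l+1) := by
          rw [cnt_self, cnt_self]
        have h3 : cnt a (l+1) (l+1) - cnt s (l+1) (l+1) ≤ queue a s (l+1) := by
          calc _ ≤ max (cnt a (l+1) (l+1) - cnt s (l+1) (l+1)) 0 := le_max_left _ _
            _ ≤ _ := le_csSup hbd1 ⟨l+1, le_refl _, rfl⟩
        rw [cnt_succ a (by omega), cnt_succ s (by omega)] at h1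
        simp only [max_le_iff]
        omega
      omega
    · exact queue_nonneg a s h (l+1)


lemma dep_isConfig (a s : Config) : IsConfig (dep a s) := by
  intro i; unfold dep; split <;> simp

lemma dep_le_s (a s : Config) (i : ℤ) : dep a s i ≤ s i ∨ dep a s i = 0 := by
  unfold dep; split
  · left; rename_i h; omega
  · right; rfl

lemma dep_val (a s : Config) (ha : IsConfig a) (hs : IsConfig s) (h : FinQ a s) (l : ℤ) :
    dep a s (l+1) = a (l+1) + queue a s l - queue a s (l+1) := by
  have hlin := queue_lindley a s h l
  have hq0 := queue_nonneg a s h l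
  have hd : (l + 1 : ℤ) - 1 = l := by omega
  unfold dep
  rw [hd]
  rcases le_total (queue a s l + a (l+1) - s (l+1)) 0 with hc | hc
  · rw [max_eq_right hc] at hlin
    rcases ha (l+1) with ha' | ha' <;> rcases hs (l+1) with hs' | hs' <;>
      simp only [ha', hs'] at hlin hc ⊢ <;> split <;> rename_i hcond <;>
      first
      | omega
      | (obtain ⟨h1, h2 | h2⟩ := hcond <;> omega)
      | (simp only [true_and, not_or, not_lt] at hcond; omega)
      | (simp at hcond; omega)
      | simp at hcond
  · rw [max_eq_left hc] at hlin
    rcases ha (l+1) with ha' | ha' <;> rcases hs (l+1) with hs' | hs' <;>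
      simp only [ha', hs'] at hlin hc ⊢ <;> split <;> rename_i hcond <;>
      first
      | omega
      | (obtain ⟨h1, h2 | h2⟩ := hcond <;> omega)
      | (simp only [true_and, not_or, not_lt] at hcond; omega)
      | (simp at hcond; omega)
      | simp at hcond

lemma cnt_dep (a s : Config) (ha : IsConfig a) (hs : IsConfig s) (h : FinQ a s) (i : ℤ) :
    ∀ l, i - 1 ≤ l →
      cnt (dep a s) i l + queue a s l = cnt a i l + queue a s (i-1) := by
  refine Int.le_induction ?_ ?_
  · rw [cnt_empty _ (by omega), cnt_empty _ (by omega)]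
  · intro l hl ih
    rw [cnt_succ _ (by omega), cnt_succ _ (by omega), dep_val a s ha hs h l]
    omega

lemma queue_le_N (a s : Config) (h : FinQ a s) (i : ℤ) :
    ∀ l, i - 1 ≤ l → ∀ hne : (Finset.Icc i (l+1)).Nonempty,
      queue a s l ≤ max (queue a s (i-1) + cnt a i l - cnt s i l)
        ((Finset.Icc i (l+1)).sup' hne (fun m => cnt a m l - cnt s m l)) := by
  refine Int.le_induction ?_ ?_
  · intro hne
    rw [cnt_empty a (by omega), cnt_empty s (by omega)]
    exact le_max_of_le_left (by omega)
  · intro l hl ih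
    intro hne'
    have hne : (Finset.Icc i (l+1)).Nonempty := Finset.nonempty_Icc.mpr (by omega)
    have ih' := ih hne
    have hlin := queue_lindley a s h l
    set N := (Finset.Icc i (l+1)).sup' hne (fun m => cnt a m l - cnt s m l) with hN
    set N' := (Finset.Icc i (l+1+1)).sup' hne' (fun m => cnt a m (l+1) - cnt s m (l+1)) with hN'
    have h0 : (0:ℤ) ≤ N' := by
      have h2 : cnt a (l+1+1) (l+1) - cnt s (l+1+1) (l+1)
          ≤ (Finset.Icc i (l+1+1)).sup' hne' (fun m => cnt a m (l+1) - cnt s m (l+1)) :=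
        Finset.le_sup' (fun m => cnt a m (l+1) - cnt s m (l+1))
          (Finset.mem_Icc.mpr ⟨(by omega : i ≤ l+1+1), le_refl (l+1+1)⟩)
      rw [cnt_empty a (by omega), cnt_empty s (by omega), ← hN'] at h2
      omega
    have hstep : N + (a (l+1) - s (l+1)) ≤ N' := by
      rw [hN]
      have hall : ∀ m ∈ Finset.Icc i (l+1),
          cnt a m l - cnt s m l ≤ N' - (a (l+1) - s (l+1)) := by
        intro m hm
        rw [Finset.mem_Icc] at hm
        have h1 : cnt a m (l+1) - cnt s m (l+1)
            ≤ (Finset.Icc i (l+1+1)).sup' hne' (fun m => cnt a m (l+1) - cnt s m (l+1)) :=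
          Finset.le_sup' (fun m => cnt a m (l+1) - cnt s m (l+1))
            (Finset.mem_Icc.mpr ⟨hm.1, by omega⟩)
        rw [cnt_succ a (by omega), cnt_succ s (by omega), ← hN'] at h1
        omega
      have := Finset.sup'_le hne _ hall
      omega
    rw [cnt_succ a (by omega), cnt_succ s (by omega), hlin, max_le_iff]
    constructor
    · simp only [le_max_iff] at ih' ⊢
      rcases ih' with h' | h'
      · left; omega
      · right; omega
    · exact le_max_of_le_right h0

lemma dep_le (a s : Config) (hs : IsConfig s) (k : ℤ) : dep a s k ≤ s k := by
  unfold dep; rcases hs k with h | h <;> split <;> rename_i hc <;> simp [h] <;> omega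

lemma sup_bounds (i j : ℤ) (hij : i ≤ j) (ρ A : ℝ) (a : Config)
    (hA : ∀ l ∈ Finset.Icc i j, |(cnt a i l : ℝ) - ρ * ((l:ℝ) - (i:ℝ) + 1)| ≤ A)
    (hA0 : 0 ≤ A) :
    ∀ t : ℤ, i - 1 ≤ t → t ≤ j →
      ρ * ((t:ℝ) - (i:ℝ) + 1) - A ≤ (cnt a i t : ℝ) ∧
      (cnt a i t : ℝ) ≤ ρ * ((t:ℝ) - (i:ℝ) + 1) + A := by
  intro t h1 h2
  rcases eq_or_lt_of_le h1 with rfl | h1'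
  · rw [cnt_empty a (by omega)]
    have : ((i:ℝ) - 1) - (i:ℝ) + 1 = 0 := by ring
    rw [show (((i:ℤ) - 1 : ℤ) : ℝ) = (i:ℝ) - 1 by push_cast; ring, this]
    constructor <;> simp <;> linarith
  · have ht : t ∈ Finset.Icc i j := Finset.mem_Icc.mpr ⟨by omega, h2⟩
    have := hA t ht
    rw [abs_le] at this
    constructor <;> linarith [this.1, this.2]

lemma step_bound (i j : ℤ) (hij : i ≤ j) (ρ : ℝ) (hρ1 : ρ ≤ 1)
    (a s : Config) (ha : IsConfig a) (hs : IsConfig s) (hq : FinQ a s) :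
    (Finset.Icc i j).sup' (Finset.nonempty_Icc.mpr hij)
        (fun l => |(cnt (dep a s) i l : ℝ) - ρ * ((l:ℝ) - (i:ℝ) + 1)|)
      ≤ (Finset.Icc i j).sup' (Finset.nonempty_Icc.mpr hij)
          (fun l => |(cnt a i l : ℝ) - ρ * ((l:ℝ) - (i:ℝ) + 1)|)
        + 2 * (Finset.Icc i j).sup' (Finset.nonempty_Icc.mpr hij)
          (fun l => |(cnt s i l : ℝ) - ρ * ((l:ℝ) - (i:ℝ) + 1)|) := by
  set A := (Finset.Icc i j).sup' (Finset.nonempty_Icc.mpr hij)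
      (fun l => |(cnt a i l : ℝ) - ρ * ((l:ℝ) - (i:ℝ) + 1)|) with hA
  set S := (Finset.Icc i j).sup' (Finset.nonempty_Icc.mpr hij)
      (fun l => |(cnt s i l : ℝ) - ρ * ((l:ℝ) - (i:ℝ) + 1)|) with hS
  have hAmem : ∀ l ∈ Finset.Icc i j, |(cnt a i l : ℝ) - ρ * ((l:ℝ) - (i:ℝ) + 1)| ≤ A := by
    intro l hl; rw [hA]
    exact Finset.le_sup' (fun l => |(cnt a i l : ℝ) - ρ * ((l:ℝ) - (i:ℝ) + 1)|) hl
  have hSmem : ∀ l ∈ Finset.Icc i j, |(cnt s i l : ℝ) - ρ * ((l:ℝ) - (i:ℝ) + 1)| ≤ S := by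
    intro l hl; rw [hS]
    exact Finset.le_sup' (fun l => |(cnt s i l : ℝ) - ρ * ((l:ℝ) - (i:ℝ) + 1)|) hl
  have hA0 : 0 ≤ A := le_trans (abs_nonneg _)
    (hAmem i (Finset.mem_Icc.mpr ⟨le_refl i, hij⟩))
  have hS0 : 0 ≤ S := le_trans (abs_nonneg _)
    (hSmem i (Finset.mem_Icc.mpr ⟨le_refl i, hij⟩))
  have keyA := sup_bounds i j hij ρ A a hAmem hA0
  have keyS := sup_bounds i j hij ρ S s hSmem hS0
  apply Finset.sup'_le
  intro l hl
  rw [Finset.mem_Icc] at hl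
  obtain ⟨hil, hlj⟩ := hl
  rw [abs_le]
  have htel := cnt_dep a s ha hs hq i l (by omega)
  have hQi0 := queue_nonneg a s hq (i-1)
  have hQl0 := queue_nonneg a s hq l
  constructor
  · -- lower bound
    have hne : (Finset.Icc i (l+1)).Nonempty := Finset.nonempty_Icc.mpr (by omega)
    have hqle := queue_le_N a s hq i l (by omega) hne
    rw [le_max_iff] at hqle
    rcases hqle with hcase | hcase
    · -- Q_l ≤ Q_{i-1} + a[i,l] - s[i,l], so cnt d ≥ cnt s
      have hd : cnt s i l ≤ cnt (dep a s) i l := by omega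
      have hsl := (keyS l (by omega) hlj).1
      have hcast : (cnt s i l : ℝ) ≤ (cnt (dep a s) i l : ℝ) := by exact_mod_cast hd
      linarith
    · obtain ⟨m, hm, hsup⟩ := Finset.exists_mem_eq_sup' hne
        (fun m => cnt a m l - cnt s m l)
      rw [hsup] at hcase
      rw [Finset.mem_Icc] at hm
      have hsplitA := cnt_split a hm.1 hm.2
      have hsplitS := cnt_split s hm.1 hm.2
      -- cnt d i l ≥ cnt a i (m-1) + cnt s i l - cnt s i (m-1)
      have hd : cnt a i (m-1) + cnt s i l - cnt s i (m-1) ≤ cnt (dep a s) i l := by omega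
      have h1 := (keyA (m-1) (by omega) (by omega)).1
      have h2 := (keyS l (by omega) hlj).1
      have h3 := (keyS (m-1) (by omega) (by omega)).2
      have hcast : (cnt a i (m-1) : ℝ) + (cnt s i l : ℝ) - (cnt s i (m-1) : ℝ)
          ≤ (cnt (dep a s) i l : ℝ) := by exact_mod_cast hd
      linarith
  · -- upper bound
    have hd : cnt (dep a s) i l ≤ cnt s i l :=
      Finset.sum_le_sum (fun k _ => dep_le a s hs k)
    have hcast : (cnt (dep a s) i l : ℝ) ≤ (cnt s i l : ℝ) := by exact_mod_cast hd
    have hsl := (keyS l (by omega) hlj).2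
    linarith


lemma tandem_bound (i j : ℤ) (hij : i ≤ j) (ρ : ℝ) (hρ1 : ρ ≤ 1) :
    ∀ (ss : List Config) (x : Config), IsConfig x → (∀ s ∈ ss, IsConfig s) →
      TandemFinQ (x :: ss) →
      (Finset.Icc i j).sup' (Finset.nonempty_Icc.mpr hij)
        (fun l => |(cnt (Dtandem x ss) i l : ℝ) - ρ * ((l:ℝ) - (i:ℝ) + 1)|)
      ≤ (Finset.Icc i j).sup' (Finset.nonempty_Icc.mpr hij)
          (fun l => |(cnt x i l : ℝ) - ρ * ((l:ℝ) - (i:ℝ) + 1)|)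
        + 2 * (ss.map (fun s => (Finset.Icc i j).sup' (Finset.nonempty_Icc.mpr hij)
            (fun l => |(cnt s i l : ℝ) - ρ * ((l:ℝ) - (i:ℝ) + 1)|))).sum := by
  intro ss
  induction ss with
  | nil =>
      intro x hx _ _
      simp [Dtandem]
  | cons s rest ih =>
      intro x hx hss hfq
      have hfq' : FinQ x s ∧ TandemFinQ (dep x s :: rest) := by
        rw [TandemFinQ] at hfq
        exact hfq
      have hDt : Dtandem x (s :: rest) = Dtandem (dep x s) rest := rfl
      rw [hDt]
      have hxs : IsConfig s := hss s List.mem_cons_self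
      have h1 := ih (dep x s) (dep_isConfig x s)
        (fun t ht => hss t (List.mem_cons_of_mem s ht)) hfq'.2
      have h2 := step_bound i j hij ρ hρ1 x s hx hxs hfq'.1
      rw [List.map_cons, List.sum_cons]
      linarith

/-- With `dₙ = Dⁿ(x₁,…,xₙ)` (all queue lengths in its recursive
definition being finite),
`max_{l ∈ [i,j]} |dₙ[i,l] − ρ(l−i+1)| ≤ 2 ∑_{k=1}^n max_{l ∈ [i,j]} |x_k[i,l] − ρ(l−i+1)|`. -/
theorem stmt8 (i j : ℤ) (hij : i ≤ j) (n : ℕ) (hn : 2 ≤ n)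
    (ρ : ℝ) (hρ0 : 0 < ρ) (hρ1 : ρ < 1)
    (x : Fin n → Config) (hx : ∀ k, IsConfig (x k))
    (hfq : TandemFinQ (List.ofFn x)) :
    (Finset.Icc i j).sup' (Finset.nonempty_Icc.mpr hij)
        (fun l => |(cnt (DtandemN x) i l : ℝ) - ρ * ((l : ℝ) - (i : ℝ) + 1)|)
      ≤ 2 * ∑ k : Fin n, (Finset.Icc i j).sup' (Finset.nonempty_Icc.mpr hij)
          (fun l => |(cnt (x k) i l : ℝ) - ρ * ((l : ℝ) - (i : ℝ) + 1)|) := by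
  obtain ⟨m, rfl⟩ : ∃ m, n = m + 1 := ⟨n - 1, by omega⟩
  have hofn : List.ofFn x = x 0 :: List.ofFn (fun k : Fin m => x k.succ) := by
    rw [List.ofFn_succ]
  have hD : DtandemN x = Dtandem (x 0) (List.ofFn (fun k : Fin m => x k.succ)) := by
    rw [DtandemN, hofn]; rfl
  rw [hD]
  have hbound := tandem_bound i j hij ρ (le_of_lt hρ1)
    (List.ofFn (fun k : Fin m => x k.succ)) (x 0) (hx 0)
    (by
      intro t ht
      rw [List.mem_ofFn] at ht
      obtain ⟨k, rfl⟩ := ht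
      exact hx k.succ)
    (by rw [← hofn]; exact hfq)
  set M : Config → ℝ := fun c => (Finset.Icc i j).sup' (Finset.nonempty_Icc.mpr hij)
      (fun l => |(cnt c i l : ℝ) - ρ * ((l:ℝ) - (i:ℝ) + 1)|) with hM
  have hsum : ((List.ofFn (fun k : Fin m => x k.succ)).map M).sum
      = ∑ k : Fin m, M (x k.succ) := by
    rw [List.map_ofFn, List.sum_ofFn]
    rfl
  have hsplit : ∑ k : Fin (m+1), M (x k) = M (x 0) + ∑ k : Fin m, M (x k.succ) :=
    Fin.sum_univ_succ _
  have hM0 : 0 ≤ M (x 0) := by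
    rw [hM]
    exact le_trans (abs_nonneg ((cnt (x 0) i i : ℝ) - ρ * ((i:ℝ) - (i:ℝ) + 1)))
      (Finset.le_sup' (fun l => |(cnt (x 0) i l : ℝ) - ρ * ((l:ℝ) - (i:ℝ) + 1)|)
        (Finset.mem_Icc.mpr ⟨le_refl i, hij⟩))
  rw [hsum] at hbound
  calc _ ≤ M (x 0) + 2 * ∑ k : Fin m, M (x k.succ) := hbound
    _ ≤ 2 * (M (x 0) + ∑ k : Fin m, M (x k.succ)) := by linarith
    _ = 2 * ∑ k : Fin (m+1), M (x k) := by rw [hsplit]
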